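/- arXiv:1804.02080 — 2 statements merged into one kernel-verified Lean document; each statement's English description precedes it below -/
import Mathlib

section
/- Let V_m, V_n, I be complex n-vectors with all entries of V_n nonzero, Z an n×n complex matrix with V_m = V_n + Z I, S = V_n ∘ I*, Γ_{φψ} = V_n^φ/V_n^ψ, M = Re(Γ ∘ Z*), N = Im(Γ ∘ Z*), S = P + iQ. Then for each phase φ, |V_m^φ||V_n^φ| sin(θ_m^φ − θ_n^φ) = −(N P + M Q)_φ, where θ_m^φ, θ_n^φ are arguments of V_m^φ, V_n^φ. -/
open Complex Real

theorem angle_relation (n : ℕ) (Vm Vn I : Fin n → ℂ)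
    (Z : Matrix (Fin n) (Fin n) ℂ)
    (hVn : ∀ φ, Vn φ ≠ 0) (h : Vm = Vn + Z.mulVec I) :
    let S : Fin n → ℂ := fun φ => Vn φ * star (I φ)
    let Γ : Matrix (Fin n) (Fin n) ℂ := fun φ ψ => Vn φ / Vn ψ
    let M : Matrix (Fin n) (Fin n) ℝ :=
      fun φ ψ => (Γ φ ψ * starRingEnd ℂ (Z φ ψ)).re
    let N : Matrix (Fin n) (Fin n) ℝ :=
      fun φ ψ => (Γ φ ψ * starRingEnd ℂ (Z φ ψ)).im
    let P : Fin n → ℝ := fun φ => (S φ).re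
    let Q : Fin n → ℝ := fun φ => (S φ).im
    ∀ φ : Fin n,
      ‖Vm φ‖ * ‖Vn φ‖
          * Real.sin ((Vm φ).arg - (Vn φ).arg)
        = -((N.mulVec P + M.mulVec Q) φ) := by
  intro S Γ M N P Q φ
  -- Step 1: LHS = Im(conj (Vn φ) * Vm φ)
  have key : ‖Vm φ‖ * ‖Vn φ‖
      * Real.sin ((Vm φ).arg - (Vn φ).arg)
      = ((starRingEnd ℂ (Vn φ)) * Vm φ).im := by
    have h1 := Complex.norm_mul_sin_arg (Vm φ)
    have h2 := Complex.norm_mul_cos_arg (Vm φ)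
    have h3 := Complex.norm_mul_sin_arg (Vn φ)
    have h4 := Complex.norm_mul_cos_arg (Vn φ)
    rw [Real.sin_sub, Complex.mul_im, Complex.conj_re, Complex.conj_im,
      ← h1, ← h2, ← h3, ← h4]
    ring
  rw [key]
  -- Step 2: compute Im(conj (Vn φ) * Vm φ)
  have hterm : ∀ ψ, N φ ψ * P ψ + M φ ψ * Q ψ
      = -((starRingEnd ℂ (Vn φ)) * (Z φ ψ * I ψ)).im := by
    intro ψ
    have hns := hVn ψ
    have : Γ φ ψ * starRingEnd ℂ (Z φ ψ) * S ψ
        = starRingEnd ℂ ((starRingEnd ℂ (Vn φ)) * (Z φ ψ * I ψ)) := by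
      simp only [Γ, S, map_mul, RingHomCompTriple.comp_apply, RingHom.id_apply,
        Complex.star_def]
      field_simp
    have him := congrArg Complex.im this
    rw [Complex.mul_im, Complex.conj_im] at him
    simp only [N, M, P, Q] at *
    linarith [him]
  subst h
  simp only [Pi.add_apply, Matrix.mulVec, dotProduct, mul_add,
    Complex.add_im]
  have hre : ((starRingEnd ℂ (Vn φ)) * Vn φ).im = 0 := by
    simp [Complex.mul_im]
    ring
  rw [hre, zero_add]
  rw [← Finset.sum_add_distrib]
  rw [Finset.mul_sum, Complex.im_sum]
  rw [← Finset.sum_neg_distrib]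
  exact Finset.sum_congr rfl fun ψ _ => by
    have := hterm ψ
    linarith [this]
end

section
/- Under the same hypotheses, Re(V_m* ∘ V_n) = V_n ∘ V_n* + M P − N Q (interpreting V_n ∘ V_n* as a real vector). -/
theorem angle_re_relation (n : ℕ) (Vm Vn I : Fin n → ℂ)
    (Z : Matrix (Fin n) (Fin n) ℂ)
    (hVn : ∀ φ, Vn φ ≠ 0) (h : Vm = Vn + Z.mulVec I) :
    let S : Fin n → ℂ := fun φ => Vn φ * star (I φ)
    let Γ : Matrix (Fin n) (Fin n) ℂ := fun φ ψ => Vn φ / Vn ψ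
    let M : Matrix (Fin n) (Fin n) ℝ :=
      fun φ ψ => (Γ φ ψ * starRingEnd ℂ (Z φ ψ)).re
    let N : Matrix (Fin n) (Fin n) ℝ :=
      fun φ ψ => (Γ φ ψ * starRingEnd ℂ (Z φ ψ)).im
    let P : Fin n → ℝ := fun φ => (S φ).re
    let Q : Fin n → ℝ := fun φ => (S φ).im
    (fun φ => (star (Vm φ) * Vn φ).re)
      = (fun φ => (Vn φ * star (Vn φ)).re) + M.mulVec P - N.mulVec Q := by
  intro S Γ M N P Q
  subst h
  funext φ
  simp only [Pi.add_apply, Pi.sub_apply, Matrix.mulVec, dotProduct,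
    star_add, add_mul]
  rw [Complex.add_re, mul_comm (star (Vn φ)) (Vn φ)]
  have hB : (star (∑ j, Z φ j * I j) * Vn φ).re
      = (∑ ψ, M φ ψ * P ψ) - ∑ ψ, N φ ψ * Q ψ := by
    rw [star_sum, Finset.sum_mul, Complex.re_sum, ← Finset.sum_sub_distrib]
    apply Finset.sum_congr rfl
    intro ψ _
    have key : Γ φ ψ * starRingEnd ℂ (Z φ ψ) * S ψ
        = star (Z φ ψ * I ψ) * Vn φ := by
      simp only [Γ, S, star_mul']
      field_simp [hVn ψ]
      simp only [Complex.star_def]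
      ring
    have hre := congrArg Complex.re key
    rw [Complex.mul_re] at hre
    simp only [M, N, P, Q]
    rw [← hre]
  rw [hB]
  ring
end
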